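/- For every positive integer k and all real x, y, the sum over all pairs (n,m) of nonnegative integers with n + m = k satisfies ∑_{n+m=k} L_{n,m}(x,y) = 2^k · L_k((x+y)/2), where L_k is the classical Laguerre polynomial. -/

import Mathlib

noncomputable def L2 (n m : ℕ) (x y : ℝ) : ℝ :=
  ∑ i ∈ Finset.range (m+1), ∑ s ∈ Finset.range (n+1),
    ((-1:ℝ)^(i+s) / ((Nat.factorial i) * (Nat.factorial s))) *
      ((m+n).choose (m-i)) * ((n+i).choose (n-s)) * x^s * y^i


noncomputable def Lag (n α : ℕ) (x : ℝ) : ℝ :=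
  ∑ j ∈ Finset.range (n+1), ((-1:ℝ)^j / (Nat.factorial j)) * ((n+α).choose (n-j)) * x^j


lemma nat_key (k a : ℕ) (h : a ≤ k) :
    ∑ t ∈ Finset.range (k - a + 1), k.choose (a+t) * (a+t).choose t
      = 2^(k-a) * k.choose a := by
  have hcong : ∀ t ∈ Finset.range (k - a + 1),
      k.choose (a+t) * (a+t).choose t = k.choose a * (k-a).choose t := by
    intro t ht
    rw [Finset.mem_range] at ht
    have h1 : a + t ≤ k := by omega
    have h2 : (a+t).choose t = (a+t).choose a := by
      have := Nat.choose_symm (Nat.le_add_left t a)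
      simpa using this.symm
    rw [h2, Nat.choose_mul (n := k) (Nat.le_add_right a t)]
    congr 2
    omega
  rw [Finset.sum_congr rfl hcong, ← Finset.mul_sum, Nat.sum_range_choose]
  ring

lemma key_sum (k s i : ℕ) :
    ∑ n ∈ Finset.range (k+1),
      (if n + i ≤ k ∧ s ≤ n then ((k.choose (n+i) * (n+i).choose (n-s) : ℕ) : ℝ) else 0)
    = 2^(k - (s+i)) * (k.choose (s+i)) := by
  by_cases h : s + i ≤ k
  · have hfilter : Finset.filter (fun n => n + i ≤ k ∧ s ≤ n) (Finset.range (k+1))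
        = Finset.Ico s (k - i + 1) := by
      ext n; simp only [Finset.mem_filter, Finset.mem_range, Finset.mem_Ico]; omega
    rw [← Finset.sum_filter, hfilter, Finset.sum_Ico_eq_sum_range]
    have hr : k - i + 1 - s = k - (s+i) + 1 := by omega
    rw [hr]
    have hcong : ∀ t ∈ Finset.range (k - (s+i) + 1),
        ((k.choose (s + t + i) * (s + t + i).choose (s + t - s) : ℕ) : ℝ)
          = ((k.choose ((s+i)+t) * ((s+i)+t).choose t : ℕ) : ℝ) := by
      intro t _
      congr 3 <;> omega
    rw [Finset.sum_congr rfl hcong, ← Nat.cast_sum, nat_key k (s+i) h]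
    push_cast
    ring
  · rw [Finset.sum_eq_zero, Nat.choose_eq_zero_of_lt (by omega), Nat.cast_zero, mul_zero]
    intro n hn
    rw [Finset.mem_range] at hn
    rw [if_neg]
    omega

theorem stmt14 (k : ℕ) (hk : 1 ≤ k) (x y : ℝ) :
    ∑ n ∈ Finset.range (k+1), L2 n (k-n) x y = 2^k * Lag k 0 ((x+y)/2) := by
  have hL : ∀ n ∈ Finset.range (k+1), L2 n (k-n) x y
      = ∑ i ∈ Finset.range (k+1), ∑ s ∈ Finset.range (k+1),
          ((-1:ℝ)^(i+s) / ((Nat.factorial i) * (Nat.factorial s))) * x^s * y^i *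
          (if n + i ≤ k ∧ s ≤ n then ((k.choose (n+i) * (n+i).choose (n-s) : ℕ) : ℝ) else 0) := by
    intro n hn
    rw [Finset.mem_range] at hn
    have hnk : n ≤ k := by omega
    unfold L2
    symm
    rw [← Finset.sum_subset (Finset.range_subset_range.mpr (by omega : k - n + 1 ≤ k + 1))]
    · apply Finset.sum_congr rfl
      intro i hi
      rw [Finset.mem_range] at hi
      rw [← Finset.sum_subset (Finset.range_subset_range.mpr (by omega : n + 1 ≤ k + 1))]
      · apply Finset.sum_congr rfl
        intro s hs
        rw [Finset.mem_range] at hs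
        rw [if_pos ⟨by omega, by omega⟩]
        have e1 : k - n + n = k := by omega
        have e2 : k - n - i = k - (n + i) := by omega
        rw [e1, e2, Nat.choose_symm (by omega : n + i ≤ k)]
        push_cast
        ring
      · intro s hs1 hs2
        rw [Finset.mem_range] at hs1 hs2
        rw [if_neg (by omega), mul_zero]
    · intro i hi1 hi2
      rw [Finset.mem_range] at hi1 hi2
      apply Finset.sum_eq_zero
      intro s _
      rw [if_neg (by omega), mul_zero]
  rw [Finset.sum_congr rfl hL]
  rw [Finset.sum_comm]
  have hB : ∀ i ∈ Finset.range (k+1),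
      (∑ n ∈ Finset.range (k+1), ∑ s ∈ Finset.range (k+1),
        ((-1:ℝ)^(i+s) / ((Nat.factorial i) * (Nat.factorial s))) * x^s * y^i *
          (if n + i ≤ k ∧ s ≤ n then ((k.choose (n+i) * (n+i).choose (n-s) : ℕ) : ℝ) else 0))
      = ∑ s ∈ Finset.range (k+1),
          ((-1:ℝ)^(i+s) / ((Nat.factorial i) * (Nat.factorial s))) * x^s * y^i *
            (2^(k - (s+i)) * (k.choose (s+i))) := by
    intro i _
    rw [Finset.sum_comm]
    apply Finset.sum_congr rfl
    intro s _
    rw [← Finset.mul_sum, key_sum k s i]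
  rw [Finset.sum_congr rfl hB]
  -- RHS
  unfold Lag
  rw [Finset.mul_sum]
  have hC : ∀ j ∈ Finset.range (k+1),
      (2:ℝ)^k * (((-1:ℝ)^j / (Nat.factorial j)) * ((k+0).choose (k-j)) * ((x+y)/2)^j)
      = ∑ s ∈ Finset.range (k+1),
          ((-1:ℝ)^j / (Nat.factorial j)) * (k.choose j) * 2^(k-j) * (j.choose s) * x^s * y^(j-s) := by
    intro j hj
    rw [Finset.mem_range] at hj
    have hjk : j ≤ k := by omega
    have e1 : (k+0).choose (k-j) = k.choose j := by
      rw [Nat.add_zero, Nat.choose_symm hjk]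
    have e2 : (2:ℝ)^k * ((x+y)/2)^j = 2^(k-j) * (x+y)^j := by
      rw [div_pow, ← pow_sub_mul_pow (2:ℝ) hjk]
      field_simp
    have e3 : ((x+y))^j = ∑ s ∈ Finset.range (j+1), x^s * y^(j-s) * (j.choose s) :=
      add_pow x y j
    have step : (2:ℝ)^k * (((-1:ℝ)^j / (Nat.factorial j)) * ((k+0).choose (k-j)) * ((x+y)/2)^j)
        = ∑ s ∈ Finset.range (j+1),
          ((-1:ℝ)^j / (Nat.factorial j)) * (k.choose j) * 2^(k-j) * (j.choose s) * x^s * y^(j-s) := by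
      rw [e1, show (2:ℝ)^k * (((-1:ℝ)^j / (Nat.factorial j)) * (k.choose j) * ((x+y)/2)^j)
            = ((-1:ℝ)^j / (Nat.factorial j)) * (k.choose j) * ((2:ℝ)^k * ((x+y)/2)^j) by ring,
          e2, e3, Finset.mul_sum, Finset.mul_sum]
      apply Finset.sum_congr rfl
      intro s _
      ring
    rw [step]
    apply Finset.sum_subset (Finset.range_subset_range.mpr (Nat.succ_le_succ hjk))
    intro s hs1 hs2
    rw [Finset.mem_range] at hs1 hs2
    rw [Nat.choose_eq_zero_of_lt (show j < s by omega)]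
    push_cast
    ring
  rw [Finset.sum_congr rfl hC]
  -- Step D
  rw [Finset.sum_comm (s := Finset.range (k+1)) (t := Finset.range (k+1))]
  nth_rewrite 2 [Finset.sum_comm]
  apply Finset.sum_congr rfl
  intro s hs
  rw [Finset.mem_range] at hs
  have hsk : s ≤ k := by omega
  set g : ℕ → ℝ := fun j =>
    ((-1:ℝ)^j / (Nat.factorial j)) * (k.choose j) * 2^(k-j) * (j.choose s) * x^s * y^(j-s) with hg
  have hR : (∑ j ∈ Finset.range (k+1), g j) = ∑ t ∈ Finset.range (k + 1 - s), g (s + t) := by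
    rw [← Finset.sum_Ico_eq_sum_range]
    symm
    apply Finset.sum_subset
    · intro j hj
      rw [Finset.mem_Ico] at hj
      rw [Finset.mem_range]; omega
    · intro j hj1 hj2
      rw [Finset.mem_range] at hj1
      rw [Finset.mem_Ico] at hj2
      rw [hg]
      simp only
      rw [Nat.choose_eq_zero_of_lt (show j < s by omega)]
      push_cast
      ring
  rw [hR]
  have hLi : (∑ i ∈ Finset.range (k+1),
        ((-1:ℝ)^(i+s) / ((Nat.factorial i) * (Nat.factorial s))) * x^s * y^i *
          (2^(k - (s+i)) * (k.choose (s+i))))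
      = ∑ i ∈ Finset.range (k - s + 1),
        ((-1:ℝ)^(i+s) / ((Nat.factorial i) * (Nat.factorial s))) * x^s * y^i *
          (2^(k - (s+i)) * (k.choose (s+i))) := by
    symm
    apply Finset.sum_subset (Finset.range_subset_range.mpr (by omega))
    intro i hi1 hi2
    rw [Finset.mem_range] at hi1 hi2
    rw [Nat.choose_eq_zero_of_lt (by omega), Nat.cast_zero, mul_zero, mul_zero]
  rw [hLi]
  have hrange : k + 1 - s = k - s + 1 := by omega
  rw [hrange]
  apply Finset.sum_congr rfl
  intro t ht
  rw [Finset.mem_range] at ht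
  rw [hg]
  simp only
  have e4 : s + t - s = t := by omega
  rw [e4]
  have hfac : (((s+t).choose s : ℕ) : ℝ) * (Nat.factorial t) * (Nat.factorial s) = (Nat.factorial (s+t) : ℕ) := by
    have := Nat.add_choose_mul_factorial_mul_factorial t s
    have h2 : (t+s).choose s * t.factorial * s.factorial = (t+s).factorial := this
    rw [Nat.add_comm s t]
    exact_mod_cast congrArg (Nat.cast (R := ℝ)) h2
  have hfs : (Nat.factorial s : ℝ) ≠ 0 := by positivity
  have hft : (Nat.factorial t : ℝ) ≠ 0 := by positivity
  have hfst : (Nat.factorial (s+t) : ℝ) ≠ 0 := by positivity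
  have hsign : ((-1:ℝ)^(t+s)) = ((-1:ℝ)^(s+t)) := by rw [Nat.add_comm]
  rw [hsign]
  field_simp
  rw [← hfac]
  ring
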